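/- arXiv:2105.03874 — 5 statements merged into one kernel-verified Lean document; each statement's English description precedes it below -/
import Mathlib

section
/- If each Pⱼ is an n×n column-stochastic matrix, G is a nonnegative n×n matrix, α ∈ (0,1), and T̃ is a non-expansive (in l₁) column-wise thresholding operator mapping nonnegative matrices to nonnegative matrices, then the map H(A) := T̃(G(A)), where G(A)(:,j) = α Pⱼ A(j,:)ᵀ + (1−α) G(:,j), is a contraction on ℝ₊^{n×n} with contraction constant at most α in the ‖·‖_{l₁} norm; hence the iteration X^{(q+1)} = H(X^{(q)}) converges to a unique fixed point from any nonnegative initial matrix X^{(0)}. -/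
open Filter
open scoped ENNReal NNReal

abbrev L1mat (n : ℕ) : Type := PiLp 1 fun _ : Fin n => PiLp 1 fun _ : Fin n => ℝ

lemma L1mat_dist_eq {n : ℕ} (x y : L1mat n) :
    dist x y = ∑ i, ∑ j, |x i j - y i j| := by
  have h1 : (0:ℝ) < (1:ℝ≥0∞).toReal := by norm_num
  rw [PiLp.dist_eq_sum h1]
  simp [PiLp.dist_eq_sum h1, Real.dist_eq]

abbrev toM {n : ℕ} (x : L1mat n) : Matrix (Fin n) (Fin n) ℝ := fun i j => x i j

abbrev ofM {n : ℕ} (A : Matrix (Fin n) (Fin n) ℝ) : L1mat n :=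
  WithLp.toLp 1 (fun i => WithLp.toLp 1 (A i))

/-- With column-stochastic `Pⱼ`, nonnegative `G`, `α ∈ (0,1)`, and a
non-expansive column-wise thresholding operator `T̃` preserving nonnegativity, the map
`H(A) = T̃(G(A))` with `G(A)(:,j) = α Pⱼ A(j,:)ᵀ + (1−α) G(:,j)` is an α-contraction in the
entrywise l₁ norm on nonnegative matrices; hence the iteration converges to a unique
nonnegative fixed point from any nonnegative initial matrix. -/
theorem stmt1 {n : ℕ} (α : ℝ) (hα : α ∈ Set.Ioo (0 : ℝ) 1)
    (P : Fin n → Matrix (Fin n) (Fin n) ℝ)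
    (hP : ∀ j, (∀ i k, 0 ≤ P j i k) ∧ ∀ k, ∑ i, P j i k = 1)
    (G : Matrix (Fin n) (Fin n) ℝ) (hG : ∀ i j, 0 ≤ G i j)
    (Tt : Matrix (Fin n) (Fin n) ℝ → Matrix (Fin n) (Fin n) ℝ)
    (hTtpos : ∀ A, (∀ i j, 0 ≤ A i j) → ∀ i j, 0 ≤ Tt A i j)
    (hTt : ∀ A B : Matrix (Fin n) (Fin n) ℝ, (∀ i j, 0 ≤ A i j) → (∀ i j, 0 ≤ B i j) →
      ∑ i, ∑ j, |Tt A i j - Tt B i j| ≤ ∑ i, ∑ j, |A i j - B i j|)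
    (H : Matrix (Fin n) (Fin n) ℝ → Matrix (Fin n) (Fin n) ℝ)
    (hH : ∀ A, H A =
      Tt (Matrix.of fun i' j' =>
        α * ((P j').mulVec (fun k => A j' k)) i' + (1 - α) * G i' j')) :
    (∀ A B : Matrix (Fin n) (Fin n) ℝ, (∀ i j, 0 ≤ A i j) → (∀ i j, 0 ≤ B i j) →
      ∑ i, ∑ j, |H A i j - H B i j| ≤ α * ∑ i, ∑ j, |A i j - B i j|) ∧
    (∃! X : Matrix (Fin n) (Fin n) ℝ, (∀ i j, 0 ≤ X i j) ∧ H X = X) ∧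
    (∀ X₀ : Matrix (Fin n) (Fin n) ℝ, (∀ i j, 0 ≤ X₀ i j) →
      ∀ X : Matrix (Fin n) (Fin n) ℝ, (∀ i j, 0 ≤ X i j) → H X = X →
        Tendsto (fun q => ∑ i, ∑ j, |(H^[q] X₀) i j - X i j|) atTop (nhds 0)) := by
  obtain ⟨hα0, hα1⟩ := hα
  -- nonnegativity of the inner map
  have hGA : ∀ A : Matrix (Fin n) (Fin n) ℝ, (∀ i j, 0 ≤ A i j) → ∀ i j,
      (0:ℝ) ≤ (Matrix.of fun i' j' =>
        α * ((P j').mulVec (fun k => A j' k)) i' + (1 - α) * G i' j') i j := by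
    intro A hA i j
    simp only [Matrix.of_apply, Matrix.mulVec, dotProduct]
    have h1 : (0:ℝ) ≤ ∑ k, P j i k * A j k :=
      Finset.sum_nonneg fun k _ => mul_nonneg ((hP j).1 i k) (hA j k)
    have h2 : (0:ℝ) ≤ (1 - α) * G i j := mul_nonneg (by linarith) (hG i j)
    nlinarith
  have hHpos : ∀ A : Matrix (Fin n) (Fin n) ℝ, (∀ i j, 0 ≤ A i j) → ∀ i j, 0 ≤ H A i j := by
    intro A hA i j
    rw [hH A]
    exact hTtpos _ (hGA A hA) i j
  -- the key contraction estimate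
  have key : ∀ A B : Matrix (Fin n) (Fin n) ℝ, (∀ i j, 0 ≤ A i j) → (∀ i j, 0 ≤ B i j) →
      ∑ i, ∑ j, |H A i j - H B i j| ≤ α * ∑ i, ∑ j, |A i j - B i j| := by
    intro A B hA hB
    rw [hH A, hH B]
    refine (hTt _ _ (hGA A hA) (hGA B hB)).trans ?_
    have hdiff : ∀ i j : Fin n,
        (Matrix.of fun i' j' => α * ((P j').mulVec (fun k => A j' k)) i' + (1 - α) * G i' j') i j
        - (Matrix.of fun i' j' => α * ((P j').mulVec (fun k => B j' k)) i' + (1 - α) * G i' j') i j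
        = α * ∑ k, P j i k * (A j k - B j k) := by
      intro i j
      simp only [Matrix.of_apply, Matrix.mulVec, dotProduct]
      rw [Finset.sum_congr rfl (fun k _ => mul_sub (P j i k) (A j k) (B j k)),
        Finset.sum_sub_distrib]
      ring
    calc ∑ i, ∑ j, |(Matrix.of fun i' j' =>
            α * ((P j').mulVec (fun k => A j' k)) i' + (1 - α) * G i' j') i j
          - (Matrix.of fun i' j' =>
            α * ((P j').mulVec (fun k => B j' k)) i' + (1 - α) * G i' j') i j|
        = ∑ i, ∑ j, α * |∑ k, P j i k * (A j k - B j k)| := by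
          refine Finset.sum_congr rfl fun i _ => Finset.sum_congr rfl fun j _ => ?_
          rw [hdiff i j, abs_mul, abs_of_nonneg hα0.le]
      _ ≤ ∑ i, ∑ j, α * ∑ k, P j i k * |A j k - B j k| := by
          refine Finset.sum_le_sum fun i _ => Finset.sum_le_sum fun j _ => ?_
          refine mul_le_mul_of_nonneg_left ?_ hα0.le
          refine (Finset.abs_sum_le_sum_abs _ _).trans_eq ?_
          refine Finset.sum_congr rfl fun k _ => ?_
          rw [abs_mul, abs_of_nonneg ((hP j).1 i k)]
      _ = α * ∑ j, ∑ k, (∑ i, P j i k) * |A j k - B j k| := by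
          rw [Finset.mul_sum]
          rw [Finset.sum_comm]
          refine Finset.sum_congr rfl fun j _ => ?_
          rw [← Finset.mul_sum]
          congr 1
          rw [Finset.sum_comm]
          exact Finset.sum_congr rfl fun k _ => (Finset.sum_mul _ _ _).symm
      _ = α * ∑ i, ∑ j, |A i j - B i j| := by
          congr 1
          refine Finset.sum_congr rfl fun j _ => Finset.sum_congr rfl fun k _ => ?_
          rw [(hP j).2 k, one_mul]
  refine ⟨key, ?_⟩
  -- Banach fixed point setup on the closed set of nonnegative matrices in l¹ metric
  set S : Set (L1mat n) := {x | ∀ i j, 0 ≤ x i j} with hSdef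
  have hcont : ∀ (i j : Fin n), Continuous fun x : L1mat n => x i j := fun i j =>
    (continuous_apply j).comp ((PiLp.continuous_ofLp _ _).comp
      ((continuous_apply i).comp (PiLp.continuous_ofLp _ _)))
  have hS : IsClosed S := by
    have : S = ⋂ i, ⋂ j, {x : L1mat n | 0 ≤ x i j} := by
      ext x; simp [hSdef, Set.mem_iInter]
    rw [this]
    exact isClosed_iInter fun i => isClosed_iInter fun j =>
      isClosed_le continuous_const (hcont i j)
  haveI : CompleteSpace S := hS.completeSpace_coe
  haveI : Nonempty S := ⟨⟨0, fun i j => by simp⟩⟩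
  set f : S → S := fun x => ⟨ofM (H (toM x.1)), hHpos (toM x.1) x.2⟩ with hfdef
  have hdist : ∀ x y : S, dist (f x) (f y) ≤ α * dist x y := by
    intro x y
    rw [Subtype.dist_eq, Subtype.dist_eq, L1mat_dist_eq, L1mat_dist_eq]
    exact key (toM x.1) (toM y.1) x.2 y.2
  have hαnn : (0:ℝ) ≤ α := hα0.le
  have hK : ContractingWith ⟨α, hαnn⟩ f :=
    ⟨by exact_mod_cast hα1, LipschitzWith.of_dist_le_mul hdist⟩
  set xf : S := ContractingWith.fixedPoint f hK with hxfdef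
  have hxf : f xf = xf := hK.fixedPoint_isFixedPt
  have hHxf : H (toM xf.1) = toM xf.1 := congrArg (fun z : S => toM z.1) hxf
  constructor
  · refine ⟨toM xf.1, ⟨xf.2, hHxf⟩, ?_⟩
    intro Y ⟨hY, hHY⟩
    have : (⟨ofM Y, hY⟩ : S) = xf := hK.fixedPoint_unique (Subtype.ext (congrArg ofM hHY))
    exact congrArg (fun z : S => toM z.1) this
  · intro X₀ hX₀ X hX hHX
    have hXeq : (⟨ofM X, hX⟩ : S) = xf := hK.fixedPoint_unique (Subtype.ext (congrArg ofM hHX))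
    set x0 : S := ⟨ofM X₀, hX₀⟩ with hx0def
    have hiter : ∀ q, toM (f^[q] x0).1 = H^[q] X₀ := by
      intro q
      induction q with
      | zero => rfl
      | succ q ih =>
        rw [Function.iterate_succ_apply', Function.iterate_succ_apply', ← ih]
    have ht := tendsto_iff_dist_tendsto_zero.mp (hK.tendsto_iterate_fixedPoint x0)
    have heq : (fun q => ∑ i, ∑ j, |(H^[q] X₀) i j - X i j|)
        = fun q => dist (f^[q] x0) (ContractingWith.fixedPoint f hK) := by
      funext q
      rw [Subtype.dist_eq, L1mat_dist_eq, ← hiter q, ← hxfdef, ← hXeq]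
    rw [heq]
    exact ht
end

section
/- Consider the partial-updating iteration where at each step q a subset Ω^{(q)} ⊆ {1,…,n} of column indices is selected with Ω^{(q+1)} ⊆ Ω^{(q)}, and X^{(q+1)}(:,j) = T(α Pⱼ X^{(q)}(j,:)ᵀ + (1−α) G(:,j)) for j ∈ Ω^{(q)}, while X^{(q+1)}(:,j) = X^{(q)}(:,j) for j ∉ Ω^{(q)}. If each Pⱼ is column-stochastic, T is non-expansive in the 1-norm on ℝ₊ⁿ, and α ∈ (0,1), then ‖X^{(q+2)} − X^{(q+1)}‖_{l₁} ≤ α ‖X^{(q+1)} − X^{(q)}‖_{l₁} for all q ≥ 0, and hence the sequence X^{(q)} converges. -/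
/-- Partial-updating iteration: columns in the nested index sets `Ω q` are
updated by the thresholded PageRank step, the others are kept. Then consecutive
differences contract with factor α, and the sequence converges. -/
theorem stmt3 {n : ℕ} (α : ℝ) (hα : α ∈ Set.Ioo (0 : ℝ) 1)
    (P : Fin n → Matrix (Fin n) (Fin n) ℝ)
    (hP : ∀ j, (∀ i k, 0 ≤ P j i k) ∧ ∀ k, ∑ i, P j i k = 1)
    (G : Matrix (Fin n) (Fin n) ℝ) (hG : ∀ i j, 0 ≤ G i j)
    (T : (Fin n → ℝ) → (Fin n → ℝ))
    (hTpos : ∀ a : Fin n → ℝ, (∀ i, 0 ≤ a i) → ∀ i, 0 ≤ T a i)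
    (hT : ∀ a b : Fin n → ℝ, (∀ i, 0 ≤ a i) → (∀ i, 0 ≤ b i) →
      ∑ i, |T a i - T b i| ≤ ∑ i, |a i - b i|)
    (Ω : ℕ → Finset (Fin n)) (hΩ0 : Ω 0 = Finset.univ)
    (hΩ : ∀ q, Ω (q + 1) ⊆ Ω q)
    (X : ℕ → Matrix (Fin n) (Fin n) ℝ) (hX0 : ∀ i j, 0 ≤ X 0 i j)
    (hupd : ∀ q, ∀ j ∈ Ω q, ∀ i, X (q + 1) i j =
      T (fun i' => α * ((P j).mulVec (fun k => X q j k)) i' + (1 - α) * G i' j) i)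
    (hkeep : ∀ q, ∀ j ∉ Ω q, ∀ i, X (q + 1) i j = X q i j) :
    (∀ q, ∑ i, ∑ j, |X (q + 2) i j - X (q + 1) i j| ≤
      α * ∑ i, ∑ j, |X (q + 1) i j - X q i j|) ∧
    ∃ L : Matrix (Fin n) (Fin n) ℝ, Filter.Tendsto X Filter.atTop (nhds L) := by
  obtain ⟨hα0, hα1⟩ := hα
  have hα0' : (0:ℝ) ≤ α := hα0.le
  have h1α : (0:ℝ) ≤ 1 - α := by linarith
  -- nonnegativity of all iterates
  have hpos : ∀ q i j, 0 ≤ X q i j := by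
    intro q
    induction q with
    | zero => exact hX0
    | succ q ih =>
      intro i j
      by_cases hj : j ∈ Ω q
      · rw [hupd q j hj i]
        apply hTpos
        intro i'
        have hmv : (0:ℝ) ≤ (P j).mulVec (fun k => X q j k) i' := by
          have : (P j).mulVec (fun k => X q j k) i' = ∑ k, P j i' k * X q j k := rfl
          rw [this]
          exact Finset.sum_nonneg fun k _ => mul_nonneg ((hP j).1 i' k) (ih j k)
        have h2 := mul_nonneg h1α (hG i' j)
        have h3 := mul_nonneg hα0' hmv
        linarith
      · rw [hkeep q j hj i]; exact ih i j
  -- column-wise contraction bound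
  have colbound : ∀ q, ∀ j : Fin n, ∑ i, |X (q+2) i j - X (q+1) i j| ≤
      α * ∑ k, |X (q+1) j k - X q j k| := by
    intro q j
    by_cases hj : j ∈ Ω (q+1)
    · have hjq : j ∈ Ω q := hΩ q hj
      set a := fun i' => α * ((P j).mulVec (fun k => X (q+1) j k)) i' + (1-α) * G i' j with ha_def
      set b := fun i' => α * ((P j).mulVec (fun k => X q j k)) i' + (1-α) * G i' j with hb_def
      have ha : ∀ i, 0 ≤ a i := by
        intro i
        have hmv : (0:ℝ) ≤ (P j).mulVec (fun k => X (q+1) j k) i := by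
          have : (P j).mulVec (fun k => X (q+1) j k) i = ∑ k, P j i k * X (q+1) j k := rfl
          rw [this]
          exact Finset.sum_nonneg fun k _ => mul_nonneg ((hP j).1 i k) (hpos (q+1) j k)
        have h2 := mul_nonneg h1α (hG i j)
        have h3 := mul_nonneg hα0' hmv
        simp only [ha_def]; linarith
      have hb : ∀ i, 0 ≤ b i := by
        intro i
        have hmv : (0:ℝ) ≤ (P j).mulVec (fun k => X q j k) i := by
          have : (P j).mulVec (fun k => X q j k) i = ∑ k, P j i k * X q j k := rfl
          rw [this]
          exact Finset.sum_nonneg fun k _ => mul_nonneg ((hP j).1 i k) (hpos q j k)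
        have h2 := mul_nonneg h1α (hG i j)
        have h3 := mul_nonneg hα0' hmv
        simp only [hb_def]; linarith
      have h1 : ∑ i, |X (q+2) i j - X (q+1) i j| = ∑ i, |T a i - T b i| := by
        refine Finset.sum_congr rfl fun i _ => ?_
        rw [hupd (q+1) j hj i, hupd q j hjq i]
      rw [h1]
      have hab : ∀ i, a i - b i = α * ∑ k, P j i k * (X (q+1) j k - X q j k) := by
        intro i
        have e1 : (P j).mulVec (fun k => X (q+1) j k) i = ∑ k, P j i k * X (q+1) j k := rfl
        have e2 : (P j).mulVec (fun k => X q j k) i = ∑ k, P j i k * X q j k := rfl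
        simp only [ha_def, hb_def, e1, e2, mul_sub, Finset.sum_sub_distrib]
        ring
      calc ∑ i, |T a i - T b i| ≤ ∑ i, |a i - b i| := hT a b ha hb
        _ = ∑ i, α * |∑ k, P j i k * (X (q+1) j k - X q j k)| := by
            refine Finset.sum_congr rfl fun i _ => ?_
            rw [hab i, abs_mul, abs_of_nonneg hα0']
        _ = α * ∑ i, |∑ k, P j i k * (X (q+1) j k - X q j k)| := by
            rw [Finset.mul_sum]
        _ ≤ α * ∑ i, ∑ k, P j i k * |X (q+1) j k - X q j k| := by
            refine mul_le_mul_of_nonneg_left ?_ hα0'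
            refine Finset.sum_le_sum fun i _ => ?_
            calc |∑ k, P j i k * (X (q+1) j k - X q j k)|
                ≤ ∑ k, |P j i k * (X (q+1) j k - X q j k)| :=
                  Finset.abs_sum_le_sum_abs _ _
              _ = ∑ k, P j i k * |X (q+1) j k - X q j k| := by
                  refine Finset.sum_congr rfl fun k _ => ?_
                  rw [abs_mul, abs_of_nonneg ((hP j).1 i k)]
        _ = α * ∑ k, |X (q+1) j k - X q j k| := by
            congr 1
            rw [Finset.sum_comm]
            refine Finset.sum_congr rfl fun k _ => ?_
            rw [← Finset.sum_mul, (hP j).2 k, one_mul]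
    · have hz : ∑ i, |X (q+2) i j - X (q+1) i j| = 0 := by
        refine Finset.sum_eq_zero fun i _ => ?_
        rw [hkeep (q+1) j hj i, sub_self, abs_zero]
      rw [hz]
      exact mul_nonneg hα0' (Finset.sum_nonneg fun k _ => abs_nonneg _)
  -- main contraction
  have key : ∀ q, (∑ i, ∑ j, |X (q+2) i j - X (q+1) i j|) ≤
      α * ∑ i, ∑ j, |X (q+1) i j - X q i j| := by
    intro q
    rw [Finset.sum_comm]
    calc ∑ j, ∑ i, |X (q+2) i j - X (q+1) i j|
        ≤ ∑ j, α * ∑ k, |X (q+1) j k - X q j k| :=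
          Finset.sum_le_sum fun j _ => colbound q j
      _ = α * ∑ j, ∑ k, |X (q+1) j k - X q j k| := (Finset.mul_sum _ _ _).symm
  refine ⟨key, ?_⟩
  -- convergence
  set S : ℕ → ℝ := fun q => ∑ i, ∑ j, |X (q+1) i j - X q i j| with hS_def
  have hSnn : ∀ q, 0 ≤ S q := fun q =>
    Finset.sum_nonneg fun i _ => Finset.sum_nonneg fun j _ => abs_nonneg _
  have hSgeo : ∀ q, S q ≤ S 0 * α ^ q := by
    intro q
    induction q with
    | zero => simp
    | succ q ih =>
      calc S (q+1) ≤ α * S q := key q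
        _ ≤ α * (S 0 * α ^ q) := mul_le_mul_of_nonneg_left ih hα0'
        _ = S 0 * α ^ (q+1) := by ring
  have hentry : ∀ q (i j : Fin n), |X (q+1) i j - X q i j| ≤ S q := by
    intro q i j
    calc |X (q+1) i j - X q i j| ≤ ∑ j', |X (q+1) i j' - X q i j'| :=
          Finset.single_le_sum (f := fun j' => |X (q+1) i j' - X q i j'|)
            (fun j' _ => abs_nonneg _) (Finset.mem_univ j)
      _ ≤ S q :=
          Finset.single_le_sum
            (f := fun i' => ∑ j', |X (q+1) i' j' - X q i' j'|)
            (fun i' _ => Finset.sum_nonneg fun j' _ => abs_nonneg _)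
            (Finset.mem_univ i)
  have hY : CauchySeq (fun q (i j : Fin n) => X q i j) := by
    apply cauchySeq_of_le_geometric α (S 0) hα1
    intro q
    have hb : (0:ℝ) ≤ S 0 * α ^ q := mul_nonneg (hSnn 0) (pow_nonneg hα0' q)
    rw [dist_pi_le_iff hb]
    intro i
    rw [dist_pi_le_iff hb]
    intro j
    rw [Real.dist_eq]
    calc |X q i j - X (q+1) i j| = |X (q+1) i j - X q i j| := abs_sub_comm _ _
      _ ≤ S q := hentry q i j
      _ ≤ S 0 * α ^ q := hSgeo q
  obtain ⟨L, hL⟩ := cauchySeq_tendsto_of_complete hY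
  exact ⟨L, hL⟩
end

section
/- The optimization problem min over s ∈ ℝ₊ⁿ, μ ≥ 0 of (1/2)‖s + eμ − b‖₂² + β‖s‖₁, where b ∈ ℝ₊ⁿ, β > 0, and e is the all-ones vector, has a unique optimal solution (s*, μ*). -/
/-- The thresholding subproblem
`min_{s ≥ 0, μ ≥ 0} (1/2)‖s + eμ − b‖₂² + β‖s‖₁` with `b ≥ 0`, `β > 0`,
has a unique optimal solution `(s*, μ*)`. -/
theorem stmt8 {n : ℕ} (hn : 0 < n) (b : Fin n → ℝ) (hb : ∀ i, 0 ≤ b i)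
    (β : ℝ) (hβ : 0 < β) :
    ∃! p : (Fin n → ℝ) × ℝ,
      ((∀ i, 0 ≤ p.1 i) ∧ 0 ≤ p.2) ∧
      ∀ q : (Fin n → ℝ) × ℝ, (∀ i, 0 ≤ q.1 i) → 0 ≤ q.2 →
        (1 / 2) * ∑ i, (p.1 i + p.2 - b i) ^ 2 + β * ∑ i, |p.1 i| ≤
        (1 / 2) * ∑ i, (q.1 i + q.2 - b i) ^ 2 + β * ∑ i, |q.1 i| := by
  classical
  set C : ℝ := (∑ i, b i) + β with hC
  have hbsum : (0:ℝ) ≤ ∑ i, b i := Finset.sum_nonneg fun i _ => hb i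
  have hCnn : (0:ℝ) ≤ C := by simp only [hC]; linarith
  have hcont : ContinuousOn (fun μ : ℝ => ∑ i, max (μ - b i) (-β)) (Set.Icc 0 C) := by
    apply Continuous.continuousOn
    exact continuous_finset_sum _ fun i _ =>
      ((continuous_id.sub continuous_const).max continuous_const)
  have h0 : (∑ i, max ((0:ℝ) - b i) (-β)) ≤ 0 :=
    Finset.sum_nonpos fun i _ => max_le (by linarith [hb i]) (by linarith)
  have hCpos : (0:ℝ) ≤ ∑ i, max (C - b i) (-β) := by
    apply Finset.sum_nonneg
    intro i _
    have hle : b i ≤ ∑ j, b j := Finset.single_le_sum (fun j _ => hb j) (Finset.mem_univ i)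
    have h1 : 0 ≤ C - b i := by simp only [hC]; linarith
    exact le_trans h1 (le_max_left _ _)
  obtain ⟨μ, hμmem, hgμ⟩ := intermediate_value_Icc hCnn hcont ⟨h0, hCpos⟩
  simp only at hgμ
  have hμ0 : 0 ≤ μ := hμmem.1
  set s : Fin n → ℝ := fun i => max (b i - μ - β) 0 with hs
  have hsnn : ∀ i, 0 ≤ s i := fun i => le_max_right _ _
  have hr : ∀ i, s i + μ - b i = max (μ - b i) (-β) := by
    intro i
    rcases le_total (b i - μ - β) 0 with h | h
    · simp only [hs]
      rw [max_eq_right h, max_eq_left (by linarith : -β ≤ μ - b i)]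
      ring
    · simp only [hs]
      rw [max_eq_left h, max_eq_right (by linarith : μ - b i ≤ -β)]
      ring
  have hsum : ∑ i, (s i + μ - b i) = 0 := by
    rw [Finset.sum_congr rfl fun i _ => hr i]; exact hgμ
  have hrβ : ∀ i, 0 ≤ s i + μ - b i + β := by
    intro i
    rw [hr i]
    have := le_max_right (μ - b i) (-β)
    linarith
  have hcomp : ∀ i, (s i + μ - b i + β) * s i = 0 := by
    intro i
    rcases le_total (b i - μ - β) 0 with h | h
    · have hz : s i = 0 := max_eq_right h
      rw [hz]; ring
    · have hz : s i = b i - μ - β := max_eq_left h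
      rw [hz]; ring
  -- key identity
  have key : ∀ (t : Fin n → ℝ) (ν : ℝ),
      ∑ i, ((1/2) * (t i + ν - b i) ^ 2 + β * t i)
        = ∑ i, ((1/2) * (s i + μ - b i) ^ 2 + β * s i)
          + ∑ i, ((1/2) * (t i + ν - s i - μ) ^ 2 + (s i + μ - b i + β) * t i) := by
    intro t ν
    have h1 : ∀ i, (1/2) * (t i + ν - b i) ^ 2 + β * t i
        = ((1/2) * (s i + μ - b i) ^ 2 + β * s i) + (ν - μ) * (s i + μ - b i)
          + ((1/2) * (t i + ν - s i - μ) ^ 2 + (s i + μ - b i + β) * t i) := by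
      intro i
      linear_combination -hcomp i
    calc ∑ i, ((1/2) * (t i + ν - b i) ^ 2 + β * t i)
        = ∑ i, (((1/2) * (s i + μ - b i) ^ 2 + β * s i) + (ν - μ) * (s i + μ - b i)
            + ((1/2) * (t i + ν - s i - μ) ^ 2 + (s i + μ - b i + β) * t i)) :=
          Finset.sum_congr rfl fun i _ => h1 i
      _ = ∑ i, ((1/2) * (s i + μ - b i) ^ 2 + β * s i)
            + (ν - μ) * ∑ i, (s i + μ - b i)
            + ∑ i, ((1/2) * (t i + ν - s i - μ) ^ 2 + (s i + μ - b i + β) * t i) := by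
          rw [Finset.sum_add_distrib, Finset.sum_add_distrib, ← Finset.mul_sum]
      _ = _ := by rw [hsum, mul_zero, add_zero]
  -- objective rewriting
  have hobj : ∀ (t : Fin n → ℝ) (ν : ℝ), (∀ i, 0 ≤ t i) →
      (1 / 2) * ∑ i, (t i + ν - b i) ^ 2 + β * ∑ i, |t i|
        = ∑ i, ((1/2) * (t i + ν - b i) ^ 2 + β * t i) := by
    intro t ν ht
    rw [Finset.mul_sum, Finset.mul_sum, ← Finset.sum_add_distrib]
    exact Finset.sum_congr rfl fun i _ => by rw [abs_of_nonneg (ht i)]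
  have hextra : ∀ (t : Fin n → ℝ) (ν : ℝ), (∀ i, 0 ≤ t i) →
      0 ≤ ∑ i, ((1/2) * (t i + ν - s i - μ) ^ 2 + (s i + μ - b i + β) * t i) := by
    intro t ν ht
    exact Finset.sum_nonneg fun i _ =>
      add_nonneg (by positivity) (mul_nonneg (hrβ i) (ht i))
  have hmin : ∀ q : (Fin n → ℝ) × ℝ, (∀ i, 0 ≤ q.1 i) → 0 ≤ q.2 →
      (1 / 2) * ∑ i, (s i + μ - b i) ^ 2 + β * ∑ i, |s i| ≤
      (1 / 2) * ∑ i, (q.1 i + q.2 - b i) ^ 2 + β * ∑ i, |q.1 i| := by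
    intro q hq1 hq2
    rw [hobj s μ hsnn, hobj q.1 q.2 hq1, key q.1 q.2]
    linarith [hextra q.1 q.2 hq1]
  refine ⟨(s, μ), ⟨⟨hsnn, hμ0⟩, hmin⟩, ?_⟩
  rintro ⟨t, ν⟩ ⟨⟨ht, hν⟩, hqmin⟩
  have h1 := hqmin (s, μ) hsnn hμ0
  have h2 := hmin (t, ν) ht hν
  simp only at h1 h2
  have heq : ∑ i, ((1/2) * (t i + ν - s i - μ) ^ 2 + (s i + μ - b i + β) * t i) = 0 := by
    rw [hobj s μ hsnn, hobj t ν ht, key t ν] at h1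
    linarith [hextra t ν ht]
  have hterm : ∀ i ∈ Finset.univ,
      (1/2) * (t i + ν - s i - μ) ^ 2 + (s i + μ - b i + β) * t i = 0 := by
    rw [← Finset.sum_eq_zero_iff_of_nonneg (fun i _ =>
      add_nonneg (by positivity) (mul_nonneg (hrβ i) (ht i)))]
    exact heq
  have hΔ : ∀ i, t i + ν - s i - μ = 0 := by
    intro i
    have h := hterm i (Finset.mem_univ i)
    have ha : 0 ≤ (1/2) * (t i + ν - s i - μ) ^ 2 := by positivity
    have hb' : 0 ≤ (s i + μ - b i + β) * t i := mul_nonneg (hrβ i) (ht i)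
    have hsq : (t i + ν - s i - μ) ^ 2 = 0 := by nlinarith
    exact pow_eq_zero_iff (two_ne_zero) |>.mp hsq
  have hct : ∀ i, (s i + μ - b i + β) * t i = 0 := by
    intro i
    have h := hterm i (Finset.mem_univ i)
    have ha : 0 ≤ (1/2) * (t i + ν - s i - μ) ^ 2 := by positivity
    have hb' : 0 ≤ (s i + μ - b i + β) * t i := mul_nonneg (hrβ i) (ht i)
    linarith
  -- exists i0 with strict positivity
  have hex : ∃ i, 0 < s i + μ - b i + β := by
    by_contra hno
    push_neg at hno
    have hall : ∀ i, s i + μ - b i = -β := fun i => by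
      have := hrβ i; have := hno i; linarith
    have : (0:ℝ) = ∑ i : Fin n, (-β) := by
      rw [← hsum]; exact Finset.sum_congr rfl fun i _ => hall i
    rw [Finset.sum_const, Finset.card_univ, Fintype.card_fin, nsmul_eq_mul] at this
    have hnpos : (0:ℝ) < n := by exact_mod_cast hn
    nlinarith
  obtain ⟨i0, hi0⟩ := hex
  have hti0 : t i0 = 0 := by
    rcases mul_eq_zero.mp (hct i0) with h | h
    · exact absurd h hi0.ne'
    · exact h
  have hsi0 : s i0 = 0 := by
    rcases mul_eq_zero.mp (hcomp i0) with h | h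
    · exact absurd h hi0.ne'
    · exact h
  have hνμ : ν = μ := by
    have := hΔ i0
    rw [hti0, hsi0] at this
    linarith
  have htfun : t = s := funext fun i => by
    have := hΔ i
    rw [hνμ] at this
    linarith
  exact Prod.ext htfun hνμ
end

section
/- For an order-3 stochastic tensor P (nonnegative with Σᵢ P_{ijk} = 1 for all j,k), α ∈ (0, 1/2), and a stochastic vector v, the multilinear PageRank equation x = α R(x ⊗ x) + (1−α)v has a unique stochastic solution, where R is the n×n² flattening of P along the first index. Moreover the fixed-point iteration x^{(q+1)} = αR(x^{(q)} ⊗ x^{(q)}) + (1−α)v on stochastic vectors satisfies ‖x^{(q+2)} − x^{(q+1)}‖₁ ≤ 2α ‖x^{(q+1)} − x^{(q)}‖₁ and converges to that solution. -/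
/-- ℓ¹ distance in `PiLp 1` over `Fin n → ℝ` is the sum of absolute differences. -/
lemma l1dist_eq {n : ℕ} (x y : PiLp 1 (fun _ : Fin n => ℝ)) :
    dist x y = ∑ i, |x i - y i| := by
  rw [PiLp.dist_eq_sum (by norm_num : (0:ℝ) < (1 : ENNReal).toReal)]
  simp [Real.dist_eq]

/-- Key contraction estimate. -/
lemma stmt12_key {n : ℕ} {α : ℝ} (hα0 : 0 ≤ α)
    {P : Fin n → Fin n → Fin n → ℝ}
    (hPnn : ∀ i j k, 0 ≤ P i j k) (hPs : ∀ j k, ∑ i, P i j k = 1)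
    {v : Fin n → ℝ}
    {F : (Fin n → ℝ) → (Fin n → ℝ)}
    (hF : ∀ x i, F x i =
      α * (∑ p : Fin n × Fin n, P i p.1 p.2 * (x p.1 * x p.2)) + (1 - α) * v i)
    {x y : Fin n → ℝ} (hx : ∀ i, 0 ≤ x i) (hx1 : ∑ i, x i = 1)
    (hy : ∀ i, 0 ≤ y i) (hy1 : ∑ i, y i = 1) :
    ∑ i, |F x i - F y i| ≤ 2 * α * ∑ i, |x i - y i| := by
  have hdiff : ∀ i, F x i - F y i =
      ∑ p : Fin n × Fin n, α * (P i p.1 p.2 * (x p.1 * x p.2 - y p.1 * y p.2)) := by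
    intro i
    have h1 : F x i - F y i =
        α * ((∑ p : Fin n × Fin n, P i p.1 p.2 * (x p.1 * x p.2))
          - (∑ p : Fin n × Fin n, P i p.1 p.2 * (y p.1 * y p.2))) := by
      rw [hF, hF]; ring
    rw [h1, ← Finset.sum_sub_distrib, Finset.mul_sum]
    exact Finset.sum_congr rfl fun p _ => by ring
  have step1 : ∑ i, |F x i - F y i| ≤
      α * ∑ p : Fin n × Fin n, |x p.1 * x p.2 - y p.1 * y p.2| := by
    calc ∑ i, |F x i - F y i|
        ≤ ∑ i, ∑ p : Fin n × Fin n,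
            α * (P i p.1 p.2 * |x p.1 * x p.2 - y p.1 * y p.2|) := by
          refine Finset.sum_le_sum fun i _ => ?_
          rw [hdiff i]
          refine (Finset.abs_sum_le_sum_abs _ _).trans (le_of_eq ?_)
          refine Finset.sum_congr rfl fun p _ => ?_
          rw [abs_mul, abs_mul, abs_of_nonneg hα0, abs_of_nonneg (hPnn _ _ _)]
      _ = ∑ p : Fin n × Fin n, ∑ i,
            α * (P i p.1 p.2 * |x p.1 * x p.2 - y p.1 * y p.2|) := Finset.sum_comm
      _ = ∑ p : Fin n × Fin n, α * |x p.1 * x p.2 - y p.1 * y p.2| := by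
          refine Finset.sum_congr rfl fun p _ => ?_
          have : ∑ i, α * (P i p.1 p.2 * |x p.1 * x p.2 - y p.1 * y p.2|)
              = α * |x p.1 * x p.2 - y p.1 * y p.2| * ∑ i, P i p.1 p.2 := by
            rw [Finset.mul_sum]
            exact Finset.sum_congr rfl fun i _ => by ring
          rw [this, hPs, mul_one]
      _ = α * ∑ p : Fin n × Fin n, |x p.1 * x p.2 - y p.1 * y p.2| := by
          rw [Finset.mul_sum]
  have step2 : ∑ p : Fin n × Fin n, |x p.1 * x p.2 - y p.1 * y p.2|
      ≤ 2 * ∑ i, |x i - y i| := by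
    calc ∑ p : Fin n × Fin n, |x p.1 * x p.2 - y p.1 * y p.2|
        ≤ ∑ p : Fin n × Fin n, (x p.1 * |x p.2 - y p.2| + |x p.1 - y p.1| * y p.2) := by
          refine Finset.sum_le_sum fun p _ => ?_
          have h : x p.1 * x p.2 - y p.1 * y p.2
              = x p.1 * (x p.2 - y p.2) + (x p.1 - y p.1) * y p.2 := by ring
          rw [h]
          refine (abs_add_le _ _).trans (le_of_eq ?_)
          rw [abs_mul, abs_mul, abs_of_nonneg (hx _), abs_of_nonneg (hy _)]
      _ = (∑ j, x j) * (∑ k, |x k - y k|) + (∑ j, |x j - y j|) * (∑ k, y k) := by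
          rw [Fintype.sum_prod_type, Finset.sum_mul, Finset.sum_mul]
          rw [← Finset.sum_add_distrib]
          refine Finset.sum_congr rfl fun j _ => ?_
          rw [Finset.mul_sum, Finset.mul_sum, ← Finset.sum_add_distrib]
      _ = 2 * ∑ i, |x i - y i| := by rw [hx1, hy1]; ring
  calc ∑ i, |F x i - F y i| ≤ α * ∑ p : Fin n × Fin n, |x p.1 * x p.2 - y p.1 * y p.2| := step1
    _ ≤ α * (2 * ∑ i, |x i - y i|) := by
        exact mul_le_mul_of_nonneg_left step2 hα0
    _ = 2 * α * ∑ i, |x i - y i| := by ring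

theorem stmt12 {n : ℕ} (α : ℝ) (hα : α ∈ Set.Ioo (0 : ℝ) (1 / 2))
    (P : Fin n → Fin n → Fin n → ℝ)
    (hP : (∀ i j k, 0 ≤ P i j k) ∧ ∀ j k, ∑ i, P i j k = 1)
    (v : Fin n → ℝ) (hv : ∀ i, 0 ≤ v i) (hv1 : ∑ i, v i = 1)
    (F : (Fin n → ℝ) → (Fin n → ℝ))
    (hF : ∀ x i, F x i =
      α * (∑ p : Fin n × Fin n, P i p.1 p.2 * (x p.1 * x p.2)) + (1 - α) * v i) :
    ∃ z : Fin n → ℝ, ((∀ i, 0 ≤ z i) ∧ ∑ i, z i = 1 ∧ F z = z) ∧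
      (∀ y : Fin n → ℝ, (∀ i, 0 ≤ y i) → ∑ i, y i = 1 → F y = y → y = z) ∧
      ∀ x₀ : Fin n → ℝ, (∀ i, 0 ≤ x₀ i) → ∑ i, x₀ i = 1 →
        (∀ q, ∑ i, |(F^[q + 2] x₀) i - (F^[q + 1] x₀) i| ≤
          2 * α * ∑ i, |(F^[q + 1] x₀) i - (F^[q] x₀) i|) ∧
        Filter.Tendsto (fun q => F^[q] x₀) Filter.atTop (nhds z) := by
  obtain ⟨hα0, hα1⟩ := hα
  obtain ⟨hPnn, hPs⟩ := hP
  -- F maps the simplex to itself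
  have hmap : ∀ x : Fin n → ℝ, (∀ i, 0 ≤ x i) → ∑ i, x i = 1 →
      (∀ i, 0 ≤ F x i) ∧ ∑ i, F x i = 1 := by
    intro x hx hx1
    constructor
    · intro i
      rw [hF]
      have h1 : 0 ≤ ∑ p : Fin n × Fin n, P i p.1 p.2 * (x p.1 * x p.2) :=
        Finset.sum_nonneg fun p _ => mul_nonneg (hPnn _ _ _) (mul_nonneg (hx _) (hx _))
      have h2 : (0:ℝ) ≤ (1 - α) * v i := mul_nonneg (by linarith) (hv i)
      have h3 : (0:ℝ) ≤ α * ∑ p : Fin n × Fin n, P i p.1 p.2 * (x p.1 * x p.2) :=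
        mul_nonneg (le_of_lt hα0) h1
      linarith
    · have : ∑ i, F x i = α * (∑ p : Fin n × Fin n, (x p.1 * x p.2)) + (1 - α) := by
        simp only [hF]
        rw [Finset.sum_add_distrib, ← Finset.mul_sum, ← Finset.mul_sum, hv1, mul_one]
        congr 1
        rw [Finset.sum_comm]
        congr 1
        refine Finset.sum_congr rfl fun p _ => ?_
        rw [← Finset.sum_mul, hPs, one_mul]
      rw [this]
      have h2 : ∑ p : Fin n × Fin n, (x p.1 * x p.2) = 1 := by
        rw [Fintype.sum_prod_type]
        simp only [← Finset.mul_sum]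
        rw [← Finset.sum_mul, hx1]
        norm_num
      rw [h2]; ring
  -- set up the simplex in `PiLp 1`
  set E := PiLp 1 (fun _ : Fin n => ℝ) with hE
  let S : Set E := {x | (∀ i, 0 ≤ x i) ∧ ∑ i, x i = 1}
  have hvS : (WithLp.toLp 1 v : E) ∈ S := ⟨hv, hv1⟩
  haveI : Nonempty S := ⟨⟨WithLp.toLp 1 v, hvS⟩⟩
  have hSclosed : IsClosed S := by
    have h1 : IsClosed {x : E | ∀ i, 0 ≤ x i} := by
      have : {x : E | ∀ i, 0 ≤ x i} = ⋂ i, {x : E | 0 ≤ x i} := by ext; simp [Set.mem_iInter]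
      rw [this]
      refine isClosed_iInter fun i => isClosed_le continuous_const ?_
      exact (continuous_apply i).comp (PiLp.continuous_ofLp 1 _)
    have h2 : IsClosed {x : E | ∑ i, x i = 1} := by
      refine isClosed_eq ?_ continuous_const
      exact continuous_finset_sum _ fun i _ =>
        (continuous_apply i).comp (PiLp.continuous_ofLp 1 _)
    exact (h1.inter h2)
  haveI : CompleteSpace S := hSclosed.completeSpace_coe
  -- the restricted map
  let G : S → S := fun x => ⟨WithLp.toLp 1 (F x), (hmap x x.2.1 x.2.2).1, (hmap x x.2.1 x.2.2).2⟩
  have hGiter : ∀ (x : S) (q : ℕ), ((G^[q] x : S) : Fin n → ℝ) = F^[q] (x : Fin n → ℝ) := by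
    intro x q
    induction q with
    | zero => rfl
    | succ q ih =>
      rw [Function.iterate_succ_apply', Function.iterate_succ_apply']
      show F ((G^[q] x : S) : Fin n → ℝ) = _
      rw [ih]
  -- contraction
  set K : NNReal := Real.toNNReal (2 * α) with hK
  have hKc : (K : ℝ) = 2 * α := Real.coe_toNNReal _ (by linarith)
  have hK1 : K < 1 := by
    rw [← NNReal.coe_lt_coe, hKc, NNReal.coe_one]; linarith
  have hGlip : LipschitzWith K G := by
    refine LipschitzWith.of_dist_le_mul fun x y => ?_
    rw [Subtype.dist_eq, l1dist_eq, Subtype.dist_eq, l1dist_eq, hKc]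
    exact stmt12_key (le_of_lt hα0) hPnn hPs hF x.2.1 x.2.2 y.2.1 y.2.2
  have hG : ContractingWith K G := ⟨hK1, hGlip⟩
  let z' : S := ContractingWith.fixedPoint G hG
  refine ⟨(z' : Fin n → ℝ), ⟨z'.2.1, z'.2.2, ?_⟩, ?_, ?_⟩
  · have := hG.fixedPoint_isFixedPt
    exact congrArg (fun w : S => WithLp.ofLp (w : E)) this
  · intro y hy hy1 hyf
    have : Function.IsFixedPt G ⟨WithLp.toLp 1 y, hy, hy1⟩ := Subtype.ext (congrArg (WithLp.toLp 1) hyf)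
    exact congrArg (fun w : S => WithLp.ofLp (w : E)) (hG.fixedPoint_unique this)
  · intro x₀ hx₀ hx₀1
    have hiter : ∀ q, (∀ i, 0 ≤ F^[q] x₀ i) ∧ ∑ i, F^[q] x₀ i = 1 := by
      intro q
      induction q with
      | zero => exact ⟨hx₀, hx₀1⟩
      | succ q ih =>
        rw [Function.iterate_succ_apply']
        exact hmap _ ih.1 ih.2
    constructor
    · intro q
      have h2 : F^[q + 2] x₀ = F (F^[q+1] x₀) := Function.iterate_succ_apply' F (q+1) x₀
      have h1 : F^[q + 1] x₀ = F (F^[q] x₀) := Function.iterate_succ_apply' F q x₀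
      calc ∑ i, |(F^[q + 2] x₀) i - (F^[q + 1] x₀) i|
          = ∑ i, |F (F^[q+1] x₀) i - F (F^[q] x₀) i| := by rw [h2]; nth_rewrite 2 [h1]; rfl
        _ ≤ 2 * α * ∑ i, |(F^[q + 1] x₀) i - (F^[q] x₀) i| :=
            stmt12_key (le_of_lt hα0) hPnn hPs hF
              (hiter (q+1)).1 (hiter (q+1)).2 (hiter q).1 (hiter q).2
    · have h := hG.tendsto_iterate_fixedPoint ⟨WithLp.toLp 1 x₀, hx₀, hx₀1⟩
      have hcont : Continuous fun x : S => ((x : E) : Fin n → ℝ) :=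
        (PiLp.continuous_ofLp 1 _).comp continuous_subtype_val
      have h2 := (hcont.tendsto _).comp h
      have heq : (fun q => ((G^[q] ⟨WithLp.toLp 1 x₀, hx₀, hx₀1⟩ : S) : Fin n → ℝ))
          = fun q => F^[q] x₀ := funext fun q => hGiter _ q
      rw [show (fun x : S => ((x : E) : Fin n → ℝ)) ∘
          (fun q => G^[q] ⟨WithLp.toLp 1 x₀, hx₀, hx₀1⟩) = fun q => F^[q] x₀ from heq] at h2
      exact h2
end

section
/- Let T: ℝ₊ⁿ → ℝ₊ⁿ be the solution operator of the thresholding subproblem, T(b) = s* + e μ*, where (s*, μ*) minimizes (1/2)‖s + eμ − b‖₂² + β‖s‖₁ over s ≥ 0, μ ≥ 0. If d ∈ {0,1,…,n} and the sorted values b_{i₁} ≥ ⋯ ≥ b_{iₙ} of b satisfy (n−d) b_{i_d} > Σ_{j=d+1}ⁿ b_{i_j} + nβ ≥ (n−d) b_{i_{d+1}} (with b_{i₀} = +∞), then the background value is μ* = (Σ_{j=d+1}ⁿ b_{i_j} + dβ)/(n−d), s*_{i_j} = b_{i_j} − β − μ* > 0 for j ≤ d, and s*_{i_j} = 0 for j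 > d. -/
/-- Closed-form solution of the thresholding subproblem. If the entries of
`b` sorted decreasingly (via the permutation σ, `bb k = b (σ k)` in 0-based indexing)
satisfy `(n−d) b_{i_d} > Σ_{j>d} b_{i_j} + nβ ≥ (n−d) b_{i_{d+1}}` (with `b_{i_0} = +∞`,
encoded by the case `d = 0`), then `μ* = (Σ_{j>d} b_{i_j} + dβ)/(n−d)`,
`s*_{i_j} = b_{i_j} − β − μ* > 0` for `j ≤ d` and `s*_{i_j} = 0` for `j > d` form the
optimal solution of `min_{s ≥ 0, μ ≥ 0} (1/2)‖s + eμ − b‖₂² + β‖s‖₁`. -/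
theorem stmt15 {n : ℕ} (hn : 0 < n) (b : Fin n → ℝ) (hb : ∀ i, 0 ≤ b i)
    (β : ℝ) (hβ : 0 < β)
    (σ : Equiv.Perm (Fin n))
    (hsort : ∀ j k : Fin n, j ≤ k → b (σ k) ≤ b (σ j))
    (d : ℕ) (hd : d ≤ n)
    (bb : ℕ → ℝ) (hbb : ∀ (k : ℕ) (h : k < n), bb k = b (σ ⟨k, h⟩))
    (h1 : d = 0 ∨ (0 < d ∧ ((n : ℝ) - d) * bb (d - 1) >
      (∑ k ∈ Finset.Ico d n, bb k) + n * β))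
    (h2 : (∑ k ∈ Finset.Ico d n, bb k) + n * β ≥ ((n : ℝ) - d) * bb d) :
    ∀ μstar : ℝ, μstar = ((∑ k ∈ Finset.Ico d n, bb k) + d * β) / ((n : ℝ) - d) →
    ∀ sstar : Fin n → ℝ,
      (∀ i : Fin n, sstar i = if ((σ.symm i : ℕ) < d) then b i - β - μstar else 0) →
      (∀ j : Fin n, (j : ℕ) < d → 0 < b (σ j) - β - μstar) ∧
      (∀ i, 0 ≤ sstar i) ∧ 0 ≤ μstar ∧
      ∀ (s : Fin n → ℝ) (μ : ℝ), (∀ i, 0 ≤ s i) → 0 ≤ μ →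
        (1 / 2) * ∑ i, (sstar i + μstar - b i) ^ 2 + β * ∑ i, |sstar i| ≤
        (1 / 2) * ∑ i, (s i + μ - b i) ^ 2 + β * ∑ i, |s i| := by
  intro μstar hμ sstar hs
  set S := ∑ k ∈ Finset.Ico d n, bb k with hSdef
  have hS0 : 0 ≤ S := Finset.sum_nonneg (fun k hk => by
    rw [hbb k (Finset.mem_Ico.mp hk).2]; exact hb _)
  have hn' : (1:ℝ) ≤ (n:ℝ) := by exact_mod_cast hn
  have hdn : d < n := by
    rcases lt_or_eq_of_le hd with h | h
    · exact h
    · exfalso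
      rcases h1 with h1 | ⟨hd0, h1⟩
      · omega
      · have hS : S = 0 := by rw [hSdef, h, Finset.Ico_self, Finset.sum_empty]
        have hdn' : (d : ℝ) = n := by exact_mod_cast h
        rw [hS, hdn'] at h1
        nlinarith
  have hnd : (0:ℝ) < (n:ℝ) - d := by
    have : (d:ℝ) < n := by exact_mod_cast hdn
    linarith
  have hkey : ((n:ℝ) - d) * μstar = S + d * β := by
    rw [hμ]; field_simp
  have hμ0 : 0 ≤ μstar := by
    rw [hμ]
    apply div_nonneg _ hnd.le
    have : (0:ℝ) ≤ (d:ℝ) * β := by positivity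
    linarith
  have hbbd : bb d ≤ β + μstar := by
    by_contra hc; push_neg at hc
    have := mul_lt_mul_of_pos_left hc hnd
    nlinarith
  -- positivity of the top d entries
  have hpos : ∀ j : Fin n, (j : ℕ) < d → 0 < b (σ j) - β - μstar := by
    intro j hj
    have hd0 : 0 < d := lt_of_le_of_lt (Nat.zero_le _) hj
    rcases h1 with h | ⟨_, h1⟩
    · omega
    have hd1 : d - 1 < n := by omega
    have hle : bb (d - 1) ≤ b (σ j) := by
      rw [hbb _ hd1]
      exact hsort j ⟨d - 1, hd1⟩ (by simp only [Fin.le_def]; omega)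
    have hlt : β + μstar < bb (d - 1) := by
      by_contra hc; push_neg at hc
      have := mul_le_mul_of_nonneg_left hc hnd.le
      nlinarith
    linarith
  refine ⟨hpos, ?_, hμ0, ?_⟩
  · intro i
    rw [hs i]
    split
    · next h =>
        have := hpos (σ.symm i) h
        rw [Equiv.apply_symm_apply] at this
        linarith
    · exact le_rfl
  -- the main optimality part
  have hsnn : ∀ i, 0 ≤ sstar i := by
    intro i
    rw [hs i]
    split
    · next h =>
        have := hpos (σ.symm i) h
        rw [Equiv.apply_symm_apply] at this
        linarith
    · exact le_rfl
  have hbi : ∀ i : Fin n, b i = bb (σ.symm i : ℕ) := by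
    intro i
    rw [hbb _ (σ.symm i).isLt]
    congr 1
    rw [Fin.eta, Equiv.apply_symm_apply]
  have hg : ∀ i, 0 ≤ sstar i + μstar - b i + β := by
    intro i
    rw [hs i]
    split
    · next => linarith
    · next h =>
        push_neg at h
        have hle : bb (σ.symm i : ℕ) ≤ bb d := by
          rw [hbb _ (σ.symm i).isLt, hbb d hdn]
          exact hsort ⟨d, hdn⟩ ⟨(σ.symm i : ℕ), (σ.symm i).isLt⟩
            (by simp only [Fin.le_def]; omega)
        have := hbi i
        linarith [hbbd]
  have hgs : ∀ i, (sstar i + μstar - b i + β) * sstar i = 0 := by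
    intro i
    rw [hs i]
    split
    · ring
    · ring
  -- sum of residuals is zero
  have hG : ∑ i : Fin n, (sstar i + μstar - b i) = 0 := by
    have e1 : ∑ i : Fin n, (sstar i + μstar - b i)
        = ∑ j : Fin n, (sstar (σ j) + μstar - b (σ j)) :=
      (Equiv.sum_comp σ (fun i => sstar i + μstar - b i)).symm
    have e2 : ∀ j : Fin n, sstar (σ j) + μstar - b (σ j)
        = (fun k => if k < d then -β else μstar - bb k) (j : ℕ) := by
      intro j
      show sstar (σ j) + μstar - b (σ j) = if (j : ℕ) < d then -β else μstar - bb (j : ℕ)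
      rw [hs (σ j), Equiv.symm_apply_apply]
      split
      · ring
      · rw [hbb _ j.isLt, Fin.eta]
        ring
    rw [e1, Finset.sum_congr rfl (fun j _ => e2 j),
      Fin.sum_univ_eq_sum_range (fun k => if k < d then -β else μstar - bb k) n,
      Finset.range_eq_Ico, ← Finset.sum_Ico_consecutive _ (Nat.zero_le d) hd]
    have eA : ∑ k ∈ Finset.Ico 0 d, (if k < d then -β else μstar - bb k)
        = (d : ℝ) * (-β) := by
      rw [Finset.sum_congr rfl (fun k hk => if_pos (Finset.mem_Ico.mp hk).2),
        Finset.sum_const, Nat.card_Ico, Nat.sub_zero, nsmul_eq_mul]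
    have eB : ∑ k ∈ Finset.Ico d n, (if k < d then -β else μstar - bb k)
        = ((n : ℝ) - d) * μstar - S := by
      rw [Finset.sum_congr rfl (fun k hk => if_neg (by
        have := (Finset.mem_Ico.mp hk).1; omega)),
        Finset.sum_sub_distrib, Finset.sum_const, Nat.card_Ico, nsmul_eq_mul]
      have : ((n - d : ℕ) : ℝ) = (n : ℝ) - d := by
        rw [Nat.cast_sub hd]
      rw [this, hSdef]
    rw [eA, eB, hkey]
    ring
  intro s μ hs' hμ'
  have hterm : ∀ i : Fin n,
      (1/2) * (sstar i + μstar - b i) ^ 2 + β * |sstar i|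
        + (μ - μstar) * (sstar i + μstar - b i)
      ≤ (1/2) * (s i + μ - b i) ^ 2 + β * |s i| := by
    intro i
    rw [abs_of_nonneg (hs' i), abs_of_nonneg (hsnn i)]
    nlinarith [hg i, hgs i, hs' i, sq_nonneg (s i + μ - sstar i - μstar),
      mul_nonneg (hg i) (hs' i)]
  have hsum := Finset.sum_le_sum (fun i (_ : i ∈ Finset.univ) => hterm i)
  simp only [Finset.sum_add_distrib, ← Finset.mul_sum] at hsum
  rw [hG, mul_zero, add_zero] at hsum
  linarith
end
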